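/- arXiv:2211.09506 — 2 statements merged into one kernel-verified Lean document; each statement's English description precedes it below -/
import Mathlib

section
/- Scalar version of the P₂ resolvent equation: let t, s, p be quaternions with s, p in the S-resolvent set of t (i.e. s² - 2Re(t)s + |t|² and p² - 2Re(t)p + |t|² are nonzero) and s ∉ [p]. Then S_R^{-1}(s,t) P₂^L(p,t) + P₂^R(s,t) S_L^{-1}(p,t) - 4 Q_{c,s}(t)^{-1} t̲ Q_{c,p}(t)^{-1} = [ (P₂^R(s,t) - P₂^L(p,t)) p - s̄ (P₂^R(s,t) - P₂^L(p,t)) ] (p² - 2Re(s)p + |s|²)^{-1}, where t̲ is the imaginary part of t. -/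
open scoped Quaternion

/-- The 2-sphere `[p]` of a quaternion `p`. -/
def qSphere (p : ℍ[ℝ]) : Set ℍ[ℝ] := {x | x.re = p.re ∧ ‖x.im‖ = ‖p.im‖}

/-- `Q_{c,s}(t) = s² - 2 Re(t) s + |t|²`. -/
noncomputable def Qc (s t : ℍ[ℝ]) : ℍ[ℝ] :=
  s ^ 2 - 2 * ((t.re : ℝ) : ℍ[ℝ]) * s + ((Quaternion.normSq t : ℝ) : ℍ[ℝ])

/-- `S_L^{-1}(p,t) = (p - t̄) Q_{c,p}(t)^{-1}`. -/
noncomputable def SL (p t : ℍ[ℝ]) : ℍ[ℝ] := (p - star t) * (Qc p t)⁻¹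

/-- `S_R^{-1}(s,t) = Q_{c,s}(t)^{-1} (s - t̄)`. -/
noncomputable def SR (s t : ℍ[ℝ]) : ℍ[ℝ] := (Qc s t)⁻¹ * (s - star t)

/-- `F_L(p,t) = -4 (p - t̄) Q_{c,p}(t)^{-2}`. -/
noncomputable def FL (p t : ℍ[ℝ]) : ℍ[ℝ] := -4 * (p - star t) * ((Qc p t)⁻¹) ^ 2

/-- `F_R(s,t) = -4 Q_{c,s}(t)^{-2} (s - t̄)`. -/
noncomputable def FR (s t : ℍ[ℝ]) : ℍ[ℝ] := -4 * ((Qc s t)⁻¹) ^ 2 * (s - star t)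

/-- `P₂^L(p,t) = -F_L(p,t) p + t₀ F_L(p,t)`. -/
noncomputable def P2L (p t : ℍ[ℝ]) : ℍ[ℝ] :=
  -(FL p t * p) + ((t.re : ℝ) : ℍ[ℝ]) * FL p t

/-- `P₂^R(s,t) = -s F_R(s,t) + t₀ F_R(s,t)`. -/
noncomputable def P2R (s t : ℍ[ℝ]) : ℍ[ℝ] :=
  -(s * FR s t) + ((t.re : ℝ) : ℍ[ℝ]) * FR s t

open Quaternion

private lemma key_right (t x : ℍ[ℝ]) : (x - star t) * x = Qc x t + t * (x - star t) := by
  ext <;> simp [Qc, pow_two, two_mul, re_mul, imI_mul, imJ_mul, imK_mul, normSq_def',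
    re_coe, imI_coe, imJ_coe, imK_coe] <;> ring

private lemma key_left (t x : ℍ[ℝ]) : x * (x - star t) = Qc x t + (x - star t) * t := by
  ext <;> simp [Qc, pow_two, two_mul, re_mul, imI_mul, imJ_mul, imK_mul, normSq_def',
    re_coe, imI_coe, imJ_coe, imK_coe] <;> ring

private lemma comm_Qc (t x : ℍ[ℝ]) : Commute x (Qc x t) := by
  show x * Qc x t = Qc x t * x
  ext <;> simp [Qc, pow_two, two_mul, re_mul, imI_mul, imJ_mul, imK_mul, normSq_def',
    re_coe, imI_coe, imJ_coe, imK_coe] <;> ring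

private lemma bracket_zero (t s p : ℍ[ℝ]) :
    s * (t - ((t.re : ℝ) : ℍ[ℝ])) +
      ((s - star t) * (p - ((t.re : ℝ) : ℍ[ℝ])) - (s - ((t.re : ℝ) : ℍ[ℝ])) * (p - star t)) -
      (t - ((t.re : ℝ) : ℍ[ℝ])) * p = 0 := by
  ext <;> simp [re_mul, imI_mul, imJ_mul, imK_mul, re_coe, imI_coe, imJ_coe, imK_coe] <;> ring

private lemma chs (s : ℍ[ℝ]) :
    s * s - 2 * ((s.re : ℝ) : ℍ[ℝ]) * s + ((normSq s : ℝ) : ℍ[ℝ]) = 0 := by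
  ext <;> simp [pow_two, two_mul, re_mul, imI_mul, imJ_mul, imK_mul, normSq_def',
    re_coe, imI_coe, imJ_coe, imK_coe] <;> ring

private lemma star_eq' (s : ℍ[ℝ]) : star s = 2 * ((s.re : ℝ) : ℍ[ℝ]) - s := by
  ext <;> simp [two_mul, re_coe, imI_coe, imJ_coe, imK_coe]

private lemma sigma_comm (s y : ℍ[ℝ]) :
    (2 * ((s.re : ℝ) : ℍ[ℝ])) * y = y * (2 * ((s.re : ℝ) : ℍ[ℝ])) := by
  ext <;> simp [two_mul, re_mul, imI_mul, imJ_mul, imK_mul, re_coe, imI_coe, imJ_coe, imK_coe]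
    <;> ring

private lemma glueP2 {R : Type*} [Ring R] (X Δ s p σ ν : R)
    (hσ : ∀ y, σ * y = y * σ) (hν : ∀ y, ν * y = y * ν)
    (hch : s * s - σ * s + ν = 0) (hXp : X * p = s * X + Δ) :
    X * (p ^ 2 - σ * p + ν) = Δ * p - (σ - s) * Δ := by
  calc X * (p ^ 2 - σ * p + ν)
      = (X * p) * p - (X * σ) * p + X * ν := by noncomm_ring
    _ = (X * p) * p - σ * (X * p) + ν * X := by rw [← hσ X, ← hν X, mul_assoc σ X p]
    _ = (s * X + Δ) * p - σ * (s * X + Δ) + ν * X := by rw [hXp]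
    _ = s * (X * p) + Δ * p - σ * (s * X + Δ) + ν * X := by noncomm_ring
    _ = s * (s * X + Δ) + Δ * p - σ * (s * X + Δ) + ν * X := by rw [hXp]
    _ = (s * s - σ * s + ν) * X + (Δ * p - (σ - s) * Δ) := by noncomm_ring
    _ = Δ * p - (σ - s) * Δ := by rw [hch, zero_mul, zero_add]

private lemma c_ne_zero (s p : ℍ[ℝ]) (hsp : s ∉ qSphere p) :
    p ^ 2 - 2 * ((s.re : ℝ) : ℍ[ℝ]) * p + ((Quaternion.normSq s : ℝ) : ℍ[ℝ]) ≠ 0 := by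
  intro h
  apply hsp
  rw [Quaternion.ext_iff] at h
  simp only [pow_two, two_mul, re_mul, imI_mul, imJ_mul, imK_mul, normSq_def',
    re_coe, imI_coe, imJ_coe, imK_coe, re_add, imI_add, imJ_add, imK_add,
    re_sub, imI_sub, imJ_sub, imK_sub, re_zero, imI_zero, imJ_zero, imK_zero,
    add_mul, mul_zero, zero_mul] at h
  obtain ⟨h0, h1, h2, h3⟩ := h
  have him : ∀ x : ℍ[ℝ], ‖x.im‖ * ‖x.im‖ = x.imI ^ 2 + x.imJ ^ 2 + x.imK ^ 2 := by
    intro x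
    rw [← Quaternion.normSq_eq_norm_mul_self]
    simp [normSq_def']
  have hre : s.re = p.re := by
    by_contra hr
    have hI : p.imI = 0 := by
      rcases mul_eq_zero.1 (show (p.re - s.re) * p.imI = 0 by nlinarith) with h | h
      · exact absurd (by linarith) hr
      · exact h
    have hJ : p.imJ = 0 := by
      rcases mul_eq_zero.1 (show (p.re - s.re) * p.imJ = 0 by nlinarith) with h | h
      · exact absurd (by linarith) hr
      · exact h
    have hK : p.imK = 0 := by
      rcases mul_eq_zero.1 (show (p.re - s.re) * p.imK = 0 by nlinarith) with h | h
      · exact absurd (by linarith) hr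
      · exact h
    have h4 : (p.re - s.re) ^ 2 + s.imI ^ 2 + s.imJ ^ 2 + s.imK ^ 2 = 0 := by nlinarith
    have h5 : (p.re - s.re) ^ 2 = 0 := by nlinarith [sq_nonneg s.imI, sq_nonneg s.imJ, sq_nonneg s.imK]
    have h6 : p.re - s.re = 0 := by
      exact pow_eq_zero_iff two_ne_zero |>.mp h5
    exact hr (by linarith)
  have hnrm : ‖s.im‖ * ‖s.im‖ = ‖p.im‖ * ‖p.im‖ := by
    rw [him s, him p]; nlinarith [hre]
  exact ⟨hre, (mul_self_inj_of_nonneg (norm_nonneg _) (norm_nonneg _)).1 hnrm⟩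


set_option maxHeartbeats 1600000 in
/-- Scalar version of the `P₂` resolvent equation: for quaternions `t, s, p` with
`s, p` in the `S`-resolvent set of `t` and `s ∉ [p]`,
`S_R^{-1}(s,t) P₂^L(p,t) + P₂^R(s,t) S_L^{-1}(p,t) - 4 Q_{c,s}(t)^{-1} t̲ Q_{c,p}(t)^{-1}
= [(P₂^R(s,t) - P₂^L(p,t)) p - s̄ (P₂^R(s,t) - P₂^L(p,t))] (p² - 2Re(s)p + |s|²)^{-1}`. -/
theorem P2_resolvent_equation (t s p : ℍ[ℝ])
    (hs : Qc s t ≠ 0) (hp : Qc p t ≠ 0) (hsp : s ∉ qSphere p) :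
    SR s t * P2L p t + P2R s t * SL p t -
        4 * ((Qc s t)⁻¹ * (t - ((t.re : ℝ) : ℍ[ℝ])) * (Qc p t)⁻¹) =
      ((P2R s t - P2L p t) * p - star s * (P2R s t - P2L p t)) *
        (p ^ 2 - 2 * ((s.re : ℝ) : ℍ[ℝ]) * p + ((Quaternion.normSq s : ℝ) : ℍ[ℝ]))⁻¹ := by
  have cBp : Commute p ((Qc p t)⁻¹) := (comm_Qc t p).inv_right₀
  have cAs : Commute s ((Qc s t)⁻¹) := (comm_Qc t s).inv_right₀
  have hBp : (Qc p t)⁻¹ * p = p * (Qc p t)⁻¹ := cBp.eq.symm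
  have hB2p : ((Qc p t)⁻¹) ^ 2 * p = p * ((Qc p t)⁻¹) ^ 2 := (cBp.pow_right 2).eq.symm
  have hAs : (Qc s t)⁻¹ * s = s * (Qc s t)⁻¹ := cAs.eq.symm
  have hA2s : s * ((Qc s t)⁻¹) ^ 2 = ((Qc s t)⁻¹) ^ 2 * s := (cAs.pow_right 2).eq
  have hbB : Qc p t * (Qc p t)⁻¹ = 1 := mul_inv_cancel₀ hp
  have hBb : (Qc p t)⁻¹ * Qc p t = 1 := inv_mul_cancel₀ hp
  have haA : Qc s t * (Qc s t)⁻¹ = 1 := mul_inv_cancel₀ hs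
  have hAa : (Qc s t)⁻¹ * Qc s t = 1 := inv_mul_cancel₀ hs
  have hqB2 : Qc p t * ((Qc p t)⁻¹) ^ 2 = (Qc p t)⁻¹ := by
    rw [pow_two, ← mul_assoc, hbB, one_mul]
  have hA2q : ((Qc s t)⁻¹) ^ 2 * Qc s t = (Qc s t)⁻¹ := by
    rw [pow_two, mul_assoc, hAa, mul_one]
  -- S-resolvent equations
  have hSLp : SL p t * p = 1 + t * SL p t := by
    unfold SL
    calc (p - star t) * (Qc p t)⁻¹ * p
        = (p - star t) * p * (Qc p t)⁻¹ := by rw [mul_assoc, hBp, ← mul_assoc]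
      _ = (Qc p t + t * (p - star t)) * (Qc p t)⁻¹ := by rw [key_right]
      _ = 1 + t * ((p - star t) * (Qc p t)⁻¹) := by rw [add_mul, hbB, mul_assoc]
  have hsSR : s * SR s t = 1 + SR s t * t := by
    unfold SR
    calc s * ((Qc s t)⁻¹ * (s - star t))
        = (Qc s t)⁻¹ * (s * (s - star t)) := by rw [← mul_assoc, ← hAs, mul_assoc]
      _ = (Qc s t)⁻¹ * (Qc s t + (s - star t) * t) := by rw [key_left]
      _ = 1 + (Qc s t)⁻¹ * (s - star t) * t := by rw [mul_add, hAa, mul_assoc]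
  have hSRt : SR s t * t = s * SR s t - 1 := by rw [hsSR]; noncomm_ring
  -- F-resolvent equations
  have hFLp : FL p t * p = t * FL p t - 4 * (Qc p t)⁻¹ := by
    calc FL p t * p
        = -4 * ((p - star t) * (((Qc p t)⁻¹) ^ 2 * p)) := by unfold FL; noncomm_ring
      _ = -4 * (((p - star t) * p) * ((Qc p t)⁻¹) ^ 2) := by rw [hB2p]; noncomm_ring
      _ = -4 * ((Qc p t + t * (p - star t)) * ((Qc p t)⁻¹) ^ 2) := by rw [key_right]
      _ = -4 * (Qc p t * ((Qc p t)⁻¹) ^ 2) + t * (-4 * (p - star t) * ((Qc p t)⁻¹) ^ 2) := by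
          noncomm_ring
      _ = t * FL p t - 4 * (Qc p t)⁻¹ := by rw [hqB2]; unfold FL; noncomm_ring
  have hsFR : s * FR s t = FR s t * t - 4 * (Qc s t)⁻¹ := by
    calc s * FR s t
        = -4 * ((s * ((Qc s t)⁻¹) ^ 2) * (s - star t)) := by unfold FR; noncomm_ring
      _ = -4 * (((Qc s t)⁻¹) ^ 2 * (s * (s - star t))) := by rw [hA2s]; noncomm_ring
      _ = -4 * (((Qc s t)⁻¹) ^ 2 * (Qc s t + (s - star t) * t)) := by rw [key_left]
      _ = -4 * (((Qc s t)⁻¹) ^ 2 * Qc s t) + (-4 * ((Qc s t)⁻¹) ^ 2 * (s - star t)) * t := by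
          noncomm_ring
      _ = FR s t * t - 4 * (Qc s t)⁻¹ := by rw [hA2q]; unfold FR; noncomm_ring
  -- P2 resolvent equations
  have hP2Lp : P2L p t * p = t * P2L p t + 4 * ((p - ((t.re : ℝ) : ℍ[ℝ])) * (Qc p t)⁻¹) := by
    calc P2L p t * p
        = -((FL p t * p) * p) + ((t.re : ℝ) : ℍ[ℝ]) * (FL p t * p) := by
          unfold P2L; noncomm_ring
      _ = -((t * FL p t - 4 * (Qc p t)⁻¹) * p) +
            ((t.re : ℝ) : ℍ[ℝ]) * (t * FL p t - 4 * (Qc p t)⁻¹) := by rw [hFLp]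
      _ = -(t * (FL p t * p)) + 4 * ((Qc p t)⁻¹ * p) +
            (((t.re : ℝ) : ℍ[ℝ]) * t) * FL p t - 4 * (((t.re : ℝ) : ℍ[ℝ]) * (Qc p t)⁻¹) := by
          noncomm_ring
      _ = -(t * (t * FL p t - 4 * (Qc p t)⁻¹)) + 4 * (p * (Qc p t)⁻¹) +
            (t * ((t.re : ℝ) : ℍ[ℝ])) * FL p t - 4 * (((t.re : ℝ) : ℍ[ℝ]) * (Qc p t)⁻¹) := by
          rw [hFLp, hBp, coe_commutes t.re t]
      _ = t * P2L p t + 4 * ((p - ((t.re : ℝ) : ℍ[ℝ])) * (Qc p t)⁻¹) := by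
          have e : t * P2L p t + 4 * ((p - ((t.re : ℝ) : ℍ[ℝ])) * (Qc p t)⁻¹) =
              -(t * (FL p t * p)) + t * (((t.re : ℝ) : ℍ[ℝ]) * FL p t) +
              4 * (p * (Qc p t)⁻¹) - 4 * (((t.re : ℝ) : ℍ[ℝ]) * (Qc p t)⁻¹) := by
            unfold P2L; noncomm_ring
          rw [e, hFLp]; noncomm_ring
  have hP2Rs : s * P2R s t = P2R s t * t + 4 * ((Qc s t)⁻¹ * (s - ((t.re : ℝ) : ℍ[ℝ]))) := by
    calc s * P2R s t
        = -(s * (s * FR s t)) + (s * ((t.re : ℝ) : ℍ[ℝ])) * FR s t := by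
          unfold P2R; noncomm_ring
      _ = -(s * (s * FR s t)) + (((t.re : ℝ) : ℍ[ℝ]) * s) * FR s t := by
          rw [← coe_commutes t.re s]
      _ = -(s * (s * FR s t)) + ((t.re : ℝ) : ℍ[ℝ]) * (s * FR s t) := by
          rw [mul_assoc ((t.re : ℝ) : ℍ[ℝ]) s (FR s t)]
      _ = -(s * (FR s t * t - 4 * (Qc s t)⁻¹)) +
            ((t.re : ℝ) : ℍ[ℝ]) * (FR s t * t - 4 * (Qc s t)⁻¹) := by rw [hsFR]
      _ = -((s * FR s t) * t) + 4 * (s * (Qc s t)⁻¹) +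
            (((t.re : ℝ) : ℍ[ℝ]) * FR s t) * t - 4 * (((t.re : ℝ) : ℍ[ℝ]) * (Qc s t)⁻¹) := by
          noncomm_ring
      _ = -((FR s t * t - 4 * (Qc s t)⁻¹) * t) + 4 * ((Qc s t)⁻¹ * s) +
            (((t.re : ℝ) : ℍ[ℝ]) * FR s t) * t - 4 * ((Qc s t)⁻¹ * ((t.re : ℝ) : ℍ[ℝ])) := by
          rw [hsFR, cAs.eq, coe_commutes t.re ((Qc s t)⁻¹)]
      _ = P2R s t * t + 4 * ((Qc s t)⁻¹ * (s - ((t.re : ℝ) : ℍ[ℝ]))) := by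
          have e : P2R s t * t + 4 * ((Qc s t)⁻¹ * (s - ((t.re : ℝ) : ℍ[ℝ]))) =
              -((s * FR s t) * t) + (((t.re : ℝ) : ℍ[ℝ]) * FR s t) * t +
              4 * ((Qc s t)⁻¹ * s) - 4 * ((Qc s t)⁻¹ * ((t.re : ℝ) : ℍ[ℝ])) := by
            unfold P2R; noncomm_ring
          rw [e, hsFR]; noncomm_ring
  have hP2Rt : P2R s t * t = s * P2R s t - 4 * ((Qc s t)⁻¹ * (s - ((t.re : ℝ) : ℍ[ℝ]))) := by
    rw [hP2Rs]; noncomm_ring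
  -- the key identity: X * p = s * X + (P2R - P2L)
  have hXp : (SR s t * P2L p t + P2R s t * SL p t -
        4 * ((Qc s t)⁻¹ * (t - ((t.re : ℝ) : ℍ[ℝ])) * (Qc p t)⁻¹)) * p
      = s * (SR s t * P2L p t + P2R s t * SL p t -
        4 * ((Qc s t)⁻¹ * (t - ((t.re : ℝ) : ℍ[ℝ])) * (Qc p t)⁻¹)) + (P2R s t - P2L p t) := by
    calc (SR s t * P2L p t + P2R s t * SL p t -
          4 * ((Qc s t)⁻¹ * (t - ((t.re : ℝ) : ℍ[ℝ])) * (Qc p t)⁻¹)) * p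
        = SR s t * (P2L p t * p) + P2R s t * (SL p t * p) -
            4 * ((Qc s t)⁻¹ * (t - ((t.re : ℝ) : ℍ[ℝ])) * ((Qc p t)⁻¹ * p)) := by noncomm_ring
      _ = SR s t * (t * P2L p t + 4 * ((p - ((t.re : ℝ) : ℍ[ℝ])) * (Qc p t)⁻¹)) +
            P2R s t * (1 + t * SL p t) -
            4 * ((Qc s t)⁻¹ * (t - ((t.re : ℝ) : ℍ[ℝ])) * (p * (Qc p t)⁻¹)) := by
          rw [hP2Lp, hSLp, hBp]
      _ = (SR s t * t) * P2L p t + 4 * (SR s t * ((p - ((t.re : ℝ) : ℍ[ℝ])) * (Qc p t)⁻¹)) +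
            P2R s t + (P2R s t * t) * SL p t -
            4 * ((Qc s t)⁻¹ * ((t - ((t.re : ℝ) : ℍ[ℝ])) * p) * (Qc p t)⁻¹) := by noncomm_ring
      _ = (s * SR s t - 1) * P2L p t +
            4 * (SR s t * ((p - ((t.re : ℝ) : ℍ[ℝ])) * (Qc p t)⁻¹)) + P2R s t +
            (s * P2R s t - 4 * ((Qc s t)⁻¹ * (s - ((t.re : ℝ) : ℍ[ℝ])))) * SL p t -
            4 * ((Qc s t)⁻¹ * ((t - ((t.re : ℝ) : ℍ[ℝ])) * p) * (Qc p t)⁻¹) := by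
          rw [hSRt, hP2Rt]
      _ = s * (SR s t * P2L p t + P2R s t * SL p t) -
            4 * (((Qc s t)⁻¹ * s) * ((t - ((t.re : ℝ) : ℍ[ℝ])) * (Qc p t)⁻¹)) +
            (P2R s t - P2L p t) +
            4 * ((Qc s t)⁻¹ *
              (s * (t - ((t.re : ℝ) : ℍ[ℝ])) +
                ((s - star t) * (p - ((t.re : ℝ) : ℍ[ℝ])) -
                  (s - ((t.re : ℝ) : ℍ[ℝ])) * (p - star t)) -
                (t - ((t.re : ℝ) : ℍ[ℝ])) * p) * (Qc p t)⁻¹) := by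
          unfold SR SL; noncomm_ring
      _ = s * (SR s t * P2L p t + P2R s t * SL p t) -
            4 * ((s * (Qc s t)⁻¹) * ((t - ((t.re : ℝ) : ℍ[ℝ])) * (Qc p t)⁻¹)) +
            (P2R s t - P2L p t) := by
          rw [bracket_zero t s p, hAs]
          simp only [mul_zero, zero_mul, add_zero]
      _ = s * (SR s t * P2L p t + P2R s t * SL p t -
            4 * ((Qc s t)⁻¹ * (t - ((t.re : ℝ) : ℍ[ℝ])) * (Qc p t)⁻¹)) +
            (P2R s t - P2L p t) := by noncomm_ring
  rw [eq_mul_inv_iff_mul_eq₀ (c_ne_zero s p hsp), star_eq' s]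
  exact glueP2 _ (P2R s t - P2L p t) s p (2 * ((s.re : ℝ) : ℍ[ℝ]))
    ((Quaternion.normSq s : ℝ) : ℍ[ℝ]) (sigma_comm s) (fun y => coe_commutes _ y) (chs s) hXp
end

section
/- For quaternions s, p, t with s ∉ [p], assuming s and Q_{c,s}(t) commute and p and Q_{c,p}(t) commute (which holds in the scalar quaternionic case since Q_{c,s}(t) is a polynomial in s with real coefficients depending on t), the following holds: [ (Q_{c,s}(t)^{-1}(p - s) Q_{c,p}(t)^{-1}) p - s̄ (Q_{c,s}(t)^{-1}(p - s) Q_{c,p}(t)^{-1}) ] (p² - 2Re(s)p + |s|²)^{-1} = Q_{c,s}(t)^{-1} Q_{c,p}(t)^{-1}, provided Q_{c,s}(t) commutes with p and with the factor (p² - 2Re(s)p + |s|²). -/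
open scoped Quaternion

/-- `Q_s(p) = p² - 2 Re(s) p + |s|²`. -/
noncomputable def Qs (s p : ℍ[ℝ]) : ℍ[ℝ] :=
  p ^ 2 - 2 * ((s.re : ℝ) : ℍ[ℝ]) * p + ((Quaternion.normSq s : ℝ) : ℍ[ℝ])

lemma Qs_ne_zero {s p : ℍ[ℝ]} (hsp : s ∉ qSphere p) : Qs s p ≠ 0 := by
  intro h
  apply hsp
  have h' : p ^ 2 - ((2 * s.re : ℝ) : ℍ[ℝ]) * p + ((Quaternion.normSq s : ℝ) : ℍ[ℝ]) = 0 := by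
    rw [← h, Qs, Quaternion.coe_mul, show ((2:ℝ):ℍ[ℝ]) = 2 by norm_cast]
  rw [Quaternion.ext_iff] at h'
  simp only [pow_two, Quaternion.re_mul, Quaternion.imI_mul, Quaternion.imJ_mul,
    Quaternion.imK_mul, Quaternion.re_add, Quaternion.imI_add, Quaternion.imJ_add,
    Quaternion.imK_add, Quaternion.re_sub, Quaternion.imI_sub, Quaternion.imJ_sub,
    Quaternion.imK_sub, Quaternion.re_coe, Quaternion.imI_coe, Quaternion.imJ_coe,
    Quaternion.imK_coe, Quaternion.normSq_def', Quaternion.re_zero, Quaternion.imI_zero,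
    Quaternion.imJ_zero, Quaternion.imK_zero] at h'
  obtain ⟨h1, h2, h3, h4⟩ := h'
  have hnormSq : Quaternion.normSq s.im = Quaternion.normSq p.im → ‖s.im‖ = ‖p.im‖ := by
    intro hq
    have e1 := Quaternion.normSq_eq_norm_mul_self s.im
    have e2 := Quaternion.normSq_eq_norm_mul_self p.im
    nlinarith [norm_nonneg s.im, norm_nonneg p.im]
  by_cases hre : p.re = s.re
  · refine ⟨hre.symm, hnormSq ?_⟩
    simp only [Quaternion.normSq_def', Quaternion.re_im, Quaternion.imI_im, Quaternion.imJ_im,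
      Quaternion.imK_im]
    nlinarith [h1, hre]
  · exfalso
    have hb : p.imI = 0 := by
      rcases mul_eq_zero.mp (show (p.re - s.re) * p.imI = 0 by linear_combination h2 / 2) with h' | h'
      · exact absurd (by linarith) hre
      · exact h'
    have hc : p.imJ = 0 := by
      rcases mul_eq_zero.mp (show (p.re - s.re) * p.imJ = 0 by linear_combination h3 / 2) with h' | h'
      · exact absurd (by linarith) hre
      · exact h'
    have hd : p.imK = 0 := by
      rcases mul_eq_zero.mp (show (p.re - s.re) * p.imK = 0 by linear_combination h4 / 2) with h' | h'
      · exact absurd (by linarith) hre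
      · exact h'
    apply hre
    nlinarith [h1, hb, hc, hd, sq_nonneg (p.re - s.re), sq_nonneg s.imI, sq_nonneg s.imJ,
      sq_nonneg s.imK]

/-- Step VIII of the resolvent-equation proof: for `s ∉ [p]`, with `Q_{c,s}(t)` and
`Q_{c,p}(t)` nonzero, assuming `s` commutes with `Q_{c,s}(t)` and `p` commutes with
`Q_{c,p}(t)`, and that `Q_{c,s}(t)` commutes with `p` and with `Q_s(p)`, one has
`[(Q_{c,s}(t)^{-1}(p - s) Q_{c,p}(t)^{-1}) p - s̄ (Q_{c,s}(t)^{-1}(p - s) Q_{c,p}(t)^{-1})]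
 Q_s(p)^{-1} = Q_{c,s}(t)^{-1} Q_{c,p}(t)^{-1}`. -/
theorem step_VIII_s1 (t s p : ℍ[ℝ]) (hsp : s ∉ qSphere p)
    (hs : Qc s t ≠ 0) (hp : Qc p t ≠ 0)
    (hcomm1 : s * Qc s t = Qc s t * s)
    (hcomm2 : p * Qc p t = Qc p t * p)
    (hcomm3 : Qc s t * p = p * Qc s t)
    (hcomm4 : Qc s t * Qs s p = Qs s p * Qc s t) :
    ((Qc s t)⁻¹ * (p - s) * (Qc p t)⁻¹ * p -
        star s * ((Qc s t)⁻¹ * (p - s) * (Qc p t)⁻¹)) * (Qs s p)⁻¹ =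
      (Qc s t)⁻¹ * (Qc p t)⁻¹ := by
  have hq : Qs s p ≠ 0 := Qs_ne_zero hsp
  -- star s commutes with Qc s t
  have cstar : Commute (star s) (Qc s t) := by
    rw [Quaternion.star_eq_two_re_sub]
    exact (Quaternion.coe_commute (2 * s.re) (Qc s t)).sub_left (show Commute s (Qc s t) from hcomm1)
  have cstar' : (Qc s t)⁻¹ * star s = star s * (Qc s t)⁻¹ := (cstar.inv_right₀).symm.eq
  -- p commutes with (Qc p t)⁻¹
  have cp : (Qc p t)⁻¹ * p = p * (Qc p t)⁻¹ := (((show Commute p (Qc p t) from hcomm2)).inv_right₀).symm.eq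
  -- Qs s p commutes with (Qc p t)⁻¹
  have hpc : Commute p (Qc p t) := hcomm2
  have cQs : Commute (Qs s p) (Qc p t) := by
    rw [Qs]
    exact ((hpc.pow_left 2).sub_left
      (((Commute.ofNat_left 2 (Qc p t)).mul_left
        (Quaternion.coe_commute (s.re : ℝ) (Qc p t))).mul_left hpc)).add_left
      (Quaternion.coe_commute _ _)
  have cQs' : Qs s p * (Qc p t)⁻¹ = (Qc p t)⁻¹ * Qs s p := (cQs.inv_right₀).eq
  -- the key algebraic identity
  have key : (p - s) * p - star s * (p - s) = Qs s p := by
    have h1 : star s * s = ((Quaternion.normSq s : ℝ) : ℍ[ℝ]) := Quaternion.star_mul_self s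
    have h2 : s + star s = ((2 * s.re : ℝ) : ℍ[ℝ]) := Quaternion.self_add_star' s
    have h3 : (p - s) * p - star s * (p - s) = p ^ 2 - (s + star s) * p + star s * s := by
      noncomm_ring
    rw [Qs, h3, h1, h2, Quaternion.coe_mul, show ((2 : ℝ) : ℍ[ℝ]) = 2 from by norm_cast]
  -- numerator equals A * Qs * B
  have num : (Qc s t)⁻¹ * (p - s) * (Qc p t)⁻¹ * p -
      star s * ((Qc s t)⁻¹ * (p - s) * (Qc p t)⁻¹) =
      (Qc s t)⁻¹ * Qs s p * (Qc p t)⁻¹ := by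
    have t1 : (Qc s t)⁻¹ * (p - s) * (Qc p t)⁻¹ * p =
        (Qc s t)⁻¹ * ((p - s) * p) * (Qc p t)⁻¹ := by
      rw [mul_assoc ((Qc s t)⁻¹ * (p - s)) ((Qc p t)⁻¹) p, cp]
      simp only [mul_assoc]
    have t2 : star s * ((Qc s t)⁻¹ * (p - s) * (Qc p t)⁻¹) =
        (Qc s t)⁻¹ * (star s * (p - s)) * (Qc p t)⁻¹ := by
      rw [← mul_assoc, ← mul_assoc, ← cstar']
      simp only [mul_assoc]
    rw [t1, t2, ← sub_mul, ← mul_sub, key]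
  rw [num, mul_assoc ((Qc s t)⁻¹) (Qs s p), cQs', mul_assoc ((Qc s t)⁻¹),
    mul_assoc ((Qc p t)⁻¹), mul_inv_cancel₀ hq, mul_one]
end
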